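/- In M₂(ℂ), let E₁₁ = [[1,0],[0,0]], let T = [[1,i],[−i,1]], and let S be the linear span of {I, E₁₁, T}. Let φ : M₂(ℂ) → M₂(ℂ) be the diagonal compression φ([[a,b],[c,d]]) = [[a,0],[0,d]]. Then every UCP map ψ : M₂(ℂ) → M₂(ℂ) satisfying ψ(x) = φ(x) for all x ∈ S equals φ on all of M₂(ℂ); that is, φ|_S has a unique CP-extension to M₂(ℂ). -/
import Mathlib


open Filter Topology

noncomputable section

/-- A ℂ-linear map between star algebras is *completely positive* (CP) if, for every `n`, the
induced entrywise map on `n × n` matrices sends positive elements (i.e. elements of the form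
`star N * N`, which are exactly the positive elements when the algebras are C⋆-algebras)
to positive elements. -/
def IsCPMap {A B : Type*} [Ring A] [StarRing A] [Module ℂ A]
    [Ring B] [StarRing B] [Module ℂ B] (φ : A →ₗ[ℂ] B) : Prop :=
  ∀ (n : ℕ) (M : Matrix (Fin n) (Fin n) A),
    (∃ N : Matrix (Fin n) (Fin n) A, M = star N * N) →
    ∃ P : Matrix (Fin n) (Fin n) B, M.map φ = star P * P

/-- A *unital completely positive* (UCP) map. -/
def IsUCPMap {A B : Type*} [Ring A] [StarRing A] [Module ℂ A]
    [Ring B] [StarRing B] [Module ℂ B] (φ : A →ₗ[ℂ] B) : Prop :=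
  IsCPMap φ ∧ φ 1 = 1

private lemma four_sq_zero (a b c d : ℂ)
    (h : (starRingEnd ℂ) a * a + (starRingEnd ℂ) b * b +
      ((starRingEnd ℂ) c * c + (starRingEnd ℂ) d * d) = 0) :
    a = 0 ∧ b = 0 ∧ c = 0 ∧ d = 0 := by
  have h' : ((Complex.normSq a + Complex.normSq b + (Complex.normSq c + Complex.normSq d) : ℝ) : ℂ) = 0 := by
    push_cast
    rw [Complex.normSq_eq_conj_mul_self, Complex.normSq_eq_conj_mul_self,
      Complex.normSq_eq_conj_mul_self, Complex.normSq_eq_conj_mul_self]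
    exact h
  have hr : Complex.normSq a + Complex.normSq b + (Complex.normSq c + Complex.normSq d) = 0 := by
    exact_mod_cast h'
  have ha := Complex.normSq_nonneg a
  have hb := Complex.normSq_nonneg b
  have hc := Complex.normSq_nonneg c
  have hd := Complex.normSq_nonneg d
  refine ⟨?_, ?_, ?_, ?_⟩ <;> rw [← Complex.normSq_eq_zero] <;> linarith

/-- In `M₂(ℂ)`, let `S` be the span of `{I, E₁₁, T}` where
`T = [[1, i], [−i, 1]]`, and let `φ` be the diagonal compression. Then every UCP map
`ψ : M₂(ℂ) → M₂(ℂ)` agreeing with `φ` on `S` equals `φ`; that is, `φ|_S` has a unique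
CP-extension to `M₂(ℂ)`. -/
theorem diagonal_compression_unique_cp_extension
    (E₁₁ T : Matrix (Fin 2) (Fin 2) ℂ)
    (hE : E₁₁ = !![1, 0; 0, 0]) (hT : T = !![1, Complex.I; -Complex.I, 1])
    (S : Submodule ℂ (Matrix (Fin 2) (Fin 2) ℂ))
    (hS : S = Submodule.span ℂ {(1 : Matrix (Fin 2) (Fin 2) ℂ), E₁₁, T})
    (φ : Matrix (Fin 2) (Fin 2) ℂ →ₗ[ℂ] Matrix (Fin 2) (Fin 2) ℂ)
    (hφ : ∀ M : Matrix (Fin 2) (Fin 2) ℂ, φ M = !![M 0 0, 0; 0, M 1 1]) :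
    ∀ ψ : Matrix (Fin 2) (Fin 2) ℂ →ₗ[ℂ] Matrix (Fin 2) (Fin 2) ℂ,
      IsUCPMap ψ → (∀ x ∈ S, ψ x = φ x) → ψ = φ := by
  intro ψ ⟨hcp, hunit⟩ hag
  -- basic matrix units
  set e00 : Matrix (Fin 2) (Fin 2) ℂ := !![1, 0; 0, 0] with he00
  set e01 : Matrix (Fin 2) (Fin 2) ℂ := !![0, 1; 0, 0] with he01
  set e10 : Matrix (Fin 2) (Fin 2) ℂ := !![0, 0; 1, 0] with he10
  set e11 : Matrix (Fin 2) (Fin 2) ℂ := !![0, 0; 0, 1] with he11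
  -- ψ on elements of S
  have hmemE : E₁₁ ∈ S := by
    rw [hS]; exact Submodule.subset_span (by simp)
  have hmemT : T ∈ S := by
    rw [hS]; exact Submodule.subset_span (by simp)
  have hψ00 : ψ e00 = e00 := by
    have h := hag E₁₁ hmemE
    rw [hφ, hE] at h
    rw [h]
    ext i j; fin_cases i <;> fin_cases j <;> simp [he00]
  have hψ11 : ψ e11 = e11 := by
    have h1 : e11 = 1 - e00 := by
      ext i j; fin_cases i <;> fin_cases j <;> simp [he00, he11, Matrix.one_apply]
    rw [h1, map_sub, hunit, hψ00]
  have hψT : ψ T = 1 := by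
    rw [hag T hmemT, hφ, hT]
    ext i j; fin_cases i <;> fin_cases j <;> simp [Matrix.one_apply]
  -- from T: ψ e01 = ψ e10
  have hTdecomp : T = 1 + Complex.I • e01 - Complex.I • e10 := by
    ext i j; fin_cases i <;> fin_cases j <;>
      simp [hT, he01, he10, Matrix.one_apply]
  have hψ0110 : ψ e10 = ψ e01 := by
    have h2 : ψ T = ψ 1 + Complex.I • ψ e01 - Complex.I • ψ e10 := by
      rw [hTdecomp]; simp
    rw [hψT, hunit] at h2
    have h3 : Complex.I • ψ e01 = Complex.I • ψ e10 := by
      linear_combination (norm := module) -h2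
    have := smul_right_injective (Matrix (Fin 2) (Fin 2) ℂ) Complex.I_ne_zero h3
    exact this.symm
  set X : Matrix (Fin 2) (Fin 2) ℂ := ψ e01 with hX
  -- the positive 2×2 block matrix
  set M : Matrix (Fin 2) (Fin 2) (Matrix (Fin 2) (Fin 2) ℂ) := !![e00, e01; e10, e11] with hM
  have hpos : ∃ N, M = star N * N := by
    refine ⟨!![e00, e01; 0, 0], ?_⟩
    ext i j a b
    fin_cases i <;> fin_cases j <;> fin_cases a <;> fin_cases b <;>
      simp [hM, he00, he01, he10, he11, Matrix.mul_apply, Fin.sum_univ_two,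
        Matrix.star_apply]
  obtain ⟨P, hP⟩ := hcp 2 M hpos
  have hmap : M.map ψ = !![e00, X; X, e11] := by
    ext i j a b
    fin_cases i <;> fin_cases j <;>
      simp [hM, Matrix.map_apply, hψ00, hψ11, hψ0110, hX]
  rw [hmap] at hP
  -- entrywise consequences of positivity
  have key : ∀ i j a b, (!![e00, X; X, e11] : Matrix (Fin 2) (Fin 2) (Matrix (Fin 2) (Fin 2) ℂ)) i j a b
      = ∑ k : Fin 2, ∑ c : Fin 2, (starRingEnd ℂ) (P k i c a) * P k j c b := by
    intro i j a b
    rw [hP]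
    simp [Matrix.mul_apply, Matrix.sum_apply, Fin.sum_univ_two, Matrix.star_apply,
      Complex.star_def]
  -- diagonal (0,0) entry (1,1) = 0 forces P k 0 c 1 = 0
  have hA : ∀ k c : Fin 2, P k 0 c 1 = 0 := by
    have h := (key 0 0 1 1).symm
    simp only [Fin.sum_univ_two] at h
    norm_num [he00] at h
    obtain ⟨h1, h2, h3, h4⟩ := four_sq_zero _ _ _ _ h
    intro k c; fin_cases k <;> fin_cases c <;> assumption
  -- diagonal (1,1) entry (0,0) = 0 forces P k 1 c 0 = 0
  have hB : ∀ k c : Fin 2, P k 1 c 0 = 0 := by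
    have h := (key 1 1 0 0).symm
    simp only [Fin.sum_univ_two] at h
    norm_num [he11] at h
    obtain ⟨h1, h2, h3, h4⟩ := four_sq_zero _ _ _ _ h
    intro k c; fin_cases k <;> fin_cases c <;> assumption
  have hX10 : X 1 0 = 0 := by
    have h := key 0 1 1 0
    simp only [Fin.sum_univ_two] at h
    norm_num at h
    rw [h, hA 0 0, hA 0 1, hA 1 0, hA 1 1]
    simp
  have hX00 : X 0 0 = 0 := by
    have h := key 0 1 0 0
    simp only [Fin.sum_univ_two] at h
    norm_num at h
    rw [h, hB 0 0, hB 0 1, hB 1 0, hB 1 1]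
    simp
  have hX11 : X 1 1 = 0 := by
    have h := key 0 1 1 1
    simp only [Fin.sum_univ_two] at h
    norm_num at h
    rw [h, hA 0 0, hA 0 1, hA 1 0, hA 1 1]
    simp
  have hX01 : X 0 1 = 0 := by
    -- hermitian: X 0 1 = conj (X 1 0)
    have hh : star (star P * P) = star P * P := by
      rw [star_mul, star_star]
    have h01 : (star P * P) 0 1 = star ((star P * P) 1 0) := by
      conv_lhs => rw [← hh]
      rw [Matrix.star_apply]
    have hXeq : X = star X := by
      have e1 : (!![e00, X; X, e11] : Matrix (Fin 2) (Fin 2) (Matrix (Fin 2) (Fin 2) ℂ)) 0 1 = X := by norm_num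
      have e2 : (!![e00, X; X, e11] : Matrix (Fin 2) (Fin 2) (Matrix (Fin 2) (Fin 2) ℂ)) 1 0 = X := by norm_num
      calc X = (star P * P) 0 1 := by rw [← hP, e1]
        _ = star ((star P * P) 1 0) := h01
        _ = star X := by rw [← hP, e2]
    calc X 0 1 = (star X) 0 1 := by rw [← hXeq]
      _ = (starRingEnd ℂ) (X 1 0) := by rw [Matrix.star_apply]; rfl
      _ = 0 := by rw [hX10]; simp
  have hXzero : X = 0 := by
    ext a b; fin_cases a <;> fin_cases b <;> simp [hX00, hX01, hX10, hX11]
  -- conclude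
  apply LinearMap.ext
  intro N
  have hdecomp : N = N 0 0 • e00 + N 0 1 • e01 + N 1 0 • e10 + N 1 1 • e11 := by
    ext i j; fin_cases i <;> fin_cases j <;> simp [he00, he01, he10, he11]
  rw [hφ]
  conv_lhs => rw [hdecomp]
  simp only [map_add, map_smul, hψ00, hψ11]
  rw [hψ0110, ← hX, hXzero]
  ext i j; fin_cases i <;> fin_cases j <;> simp [he00, he11]
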